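/- Let U ⊂ [0,1] be a finite set containing {0,1} that is an (ε/2)-cover of [0,1], i.e., every point of [0,1] is within ε/2 of some point of U. Then for any distribution D over [0,1]×{0,1}: dCE(D) ≤ dCE^U(D) ≤ dCE(D) + ε, where dCE^U restricts the calibrated variable u to take values in U. -/

import Mathlib

open MeasureTheory

noncomputable section

/-- The real value of a boolean outcome. -/
def yval (b : Bool) : ℝ := if b then 1 else 0

/-- `Π` is an extension of the prediction-outcome distribution `D`: it is a probability
distribution of triples `(u, v, y)` whose `(v, y)`-marginal is `D`, with `u ∈ [0,1]`,
and `(u, y)` perfectly calibrated, i.e. `E[y | u] = u` (equivalently,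
`E[(y - u) 1_{u ∈ S}] = 0` for every measurable `S`). -/
def IsExtension (D : Measure (ℝ × Bool)) (π : Measure (ℝ × (ℝ × Bool))) : Prop :=
  IsProbabilityMeasure π ∧
  π.map Prod.snd = D ∧
  (∀ᵐ p ∂π, p.1 ∈ Set.Icc (0 : ℝ) 1) ∧
  ∀ S : Set ℝ, MeasurableSet S →
    (∫ p in {p : ℝ × (ℝ × Bool) | p.1 ∈ S}, yval p.2.2 ∂π) =
      ∫ p in {p : ℝ × (ℝ × Bool) | p.1 ∈ S}, p.1 ∂π

/-- The lower distance to calibration of a distribution `D` on `[0,1] × {0,1}`. -/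
def dCE (D : Measure (ℝ × Bool)) : ℝ :=
  sInf {r : ℝ | ∃ π : Measure (ℝ × (ℝ × Bool)), IsExtension D π ∧
    r = ∫ p, |p.1 - p.2.1| ∂π}

/-- The smooth calibration error of a distribution `D` on `[0,1] × {0,1}`:
the supremum over `1`-Lipschitz weight functions `w : [0,1] → [-1,1]` of
`|E[(y - v) w(v)]|`. -/
def smCE (D : Measure (ℝ × Bool)) : ℝ :=
  sSup {r : ℝ | ∃ w : ℝ → ℝ, LipschitzWith 1 w ∧ (∀ t : ℝ, w t ∈ Set.Icc (-1 : ℝ) 1) ∧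
    r = |∫ p, (yval p.2 - p.1) * w p.1 ∂D|}

/-- The lower distance to calibration with the calibrated variable `u` restricted to
take values in `U`. -/
def dCEU (U : Set ℝ) (D : Measure (ℝ × Bool)) : ℝ :=
  sInf {r : ℝ | ∃ π : Measure (ℝ × (ℝ × Bool)), IsExtension D π ∧
    (∀ᵐ p ∂π, p.1 ∈ U) ∧ r = ∫ p, |p.1 - p.2.1| ∂π}

namespace S17

variable {U : Set ℝ}

def Afun (U : Set ℝ) (u : ℝ) : ℝ := sSup (insert 0 (U ∩ Set.Iic u))
def Bfun (U : Set ℝ) (u : ℝ) : ℝ := sInf (insert 1 (U ∩ Set.Ici u))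
def lam (U : Set ℝ) (u : ℝ) : ℝ :=
  if Afun U u = Bfun U u then 1 else (Bfun U u - u) / (Bfun U u - Afun U u)

lemma finA (hUfin : U.Finite) (u : ℝ) : (insert (0:ℝ) (U ∩ Set.Iic u)).Finite :=
  (hUfin.inter_of_left _).insert 0

lemma finB (hUfin : U.Finite) (u : ℝ) : (insert (1:ℝ) (U ∩ Set.Ici u)).Finite :=
  (hUfin.inter_of_left _).insert 1

lemma neA (u : ℝ) : (insert (0:ℝ) (U ∩ Set.Iic u)).Nonempty := ⟨0, Set.mem_insert _ _⟩
lemma neB (u : ℝ) : (insert (1:ℝ) (U ∩ Set.Ici u)).Nonempty := ⟨1, Set.mem_insert _ _⟩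

lemma Afun_mem' (hUfin : U.Finite) (u : ℝ) : Afun U u ∈ insert (0:ℝ) (U ∩ Set.Iic u) :=
  (neA u).csSup_mem (finA hUfin u)

lemma Bfun_mem' (hUfin : U.Finite) (u : ℝ) : Bfun U u ∈ insert (1:ℝ) (U ∩ Set.Ici u) :=
  (neB u).csInf_mem (finB hUfin u)

lemma Afun_mem (hUfin : U.Finite) (hU0 : (0:ℝ) ∈ U) (u : ℝ) : Afun U u ∈ U := by
  rcases Afun_mem' hUfin u with h | h
  · rw [h]; exact hU0
  · exact h.1

lemma Bfun_mem (hUfin : U.Finite) (hU1 : (1:ℝ) ∈ U) (u : ℝ) : Bfun U u ∈ U := by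
  rcases Bfun_mem' hUfin u with h | h
  · rw [h]; exact hU1
  · exact h.1

lemma Afun_nonneg (hUfin : U.Finite) (u : ℝ) : 0 ≤ Afun U u :=
  le_csSup (finA hUfin u).bddAbove (Set.mem_insert _ _)

lemma Afun_le (hUsub : U ⊆ Set.Icc (0:ℝ) 1) {u : ℝ} (hu : 0 ≤ u) : Afun U u ≤ u := by
  apply csSup_le (neA u)
  rintro b (rfl | hb)
  · exact hu
  · exact hb.2

lemma Afun_le_one (hUsub : U ⊆ Set.Icc (0:ℝ) 1) (u : ℝ) : Afun U u ≤ 1 := by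
  apply csSup_le (neA u)
  rintro b (rfl | hb)
  · norm_num
  · exact (hUsub hb.1).2

lemma Bfun_le_one (hUfin : U.Finite) (u : ℝ) : Bfun U u ≤ 1 :=
  csInf_le (finB hUfin u).bddBelow (Set.mem_insert _ _)

lemma le_Bfun (hUsub : U ⊆ Set.Icc (0:ℝ) 1) {u : ℝ} (hu : u ≤ 1) : u ≤ Bfun U u := by
  apply le_csInf (neB u)
  rintro b (rfl | hb)
  · exact hu
  · exact hb.2

lemma Bfun_nonneg (hUsub : U ⊆ Set.Icc (0:ℝ) 1) (u : ℝ) : 0 ≤ Bfun U u := by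
  apply le_csInf (neB u)
  rintro b (rfl | hb)
  · norm_num
  · exact (hUsub hb.1).1

lemma Afun_one (hUfin : U.Finite) (hU1 : (1:ℝ) ∈ U) (hUsub : U ⊆ Set.Icc (0:ℝ) 1) :
    Afun U 1 = 1 :=
  le_antisymm (Afun_le_one hUsub 1)
    (le_csSup (finA hUfin 1).bddAbove (Set.mem_insert_iff.2 (Or.inr ⟨hU1, Set.mem_Iic.mpr le_rfl⟩)))

lemma Bfun_zero (hUfin : U.Finite) (hU0 : (0:ℝ) ∈ U) (hUsub : U ⊆ Set.Icc (0:ℝ) 1) :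
    Bfun U 0 = 0 :=
  le_antisymm (csInf_le (finB hUfin 0).bddBelow (Set.mem_insert_iff.2 (Or.inr ⟨hU0, Set.mem_Ici.mpr le_rfl⟩)))
    (Bfun_nonneg hUsub 0)

lemma Afun_zero (hUfin : U.Finite) (hUsub : U ⊆ Set.Icc (0:ℝ) 1) : Afun U 0 = 0 :=
  le_antisymm (Afun_le hUsub (le_refl 0)) (Afun_nonneg hUfin 0)

lemma Bfun_one (hUfin : U.Finite) (hUsub : U ⊆ Set.Icc (0:ℝ) 1) : Bfun U 1 = 1 :=
  le_antisymm (Bfun_le_one hUfin 1) (le_Bfun hUsub (le_refl 1))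

lemma mix (hUfin : U.Finite) (hUsub : U ⊆ Set.Icc (0:ℝ) 1) {u : ℝ}
    (hu : u ∈ Set.Icc (0:ℝ) 1) :
    lam U u * Afun U u + (1 - lam U u) * Bfun U u = u := by
  by_cases h : Afun U u = Bfun U u
  · have h1 : Afun U u ≤ u := Afun_le hUsub hu.1
    have h2 : u ≤ Bfun U u := le_Bfun hUsub hu.2
    have h3 : Afun U u = u := le_antisymm h1 (h ▸ h2)
    simp only [lam, if_pos h]
    rw [← h]
    linarith
  · have hAu : Afun U u ≤ u := Afun_le hUsub hu.1
    have huB : u ≤ Bfun U u := le_Bfun hUsub hu.2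
    have hAB : Afun U u < Bfun U u := lt_of_le_of_ne (hAu.trans huB) h
    have hne : Bfun U u - Afun U u ≠ 0 := sub_ne_zero.mpr (ne_of_gt hAB)
    simp only [lam, if_neg h]
    field_simp
    ring

lemma lam_mem (hUfin : U.Finite) (hUsub : U ⊆ Set.Icc (0:ℝ) 1) {u : ℝ}
    (hu : u ∈ Set.Icc (0:ℝ) 1) : lam U u ∈ Set.Icc (0:ℝ) 1 := by
  by_cases h : Afun U u = Bfun U u
  · simp [lam, h]
  · have hAu : Afun U u ≤ u := Afun_le hUsub hu.1
    have huB : u ≤ Bfun U u := le_Bfun hUsub hu.2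
    have hAB : Afun U u < Bfun U u := lt_of_le_of_ne (hAu.trans huB) h
    simp only [lam, if_neg h]
    constructor
    · exact div_nonneg (by linarith) (by linarith)
    · rw [div_le_one (by linarith)]; linarith

lemma gap (hUfin : U.Finite) (hUsub : U ⊆ Set.Icc (0:ℝ) 1) {ε : ℝ} (hε : 0 < ε)
    (hcover : ∀ x ∈ Set.Icc (0 : ℝ) 1, ∃ y ∈ U, |x - y| ≤ ε / 2) {u : ℝ}
    (hu : u ∈ Set.Icc (0:ℝ) 1) : Bfun U u - Afun U u ≤ ε := by
  have hAu : Afun U u ≤ u := Afun_le hUsub hu.1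
  have huB : u ≤ Bfun U u := le_Bfun hUsub hu.2
  set A := Afun U u; set B := Bfun U u
  have hA0 : 0 ≤ A := Afun_nonneg hUfin u
  have hB1 : B ≤ 1 := Bfun_le_one hUfin u
  have hm : (A + B) / 2 ∈ Set.Icc (0:ℝ) 1 := ⟨by linarith, by linarith⟩
  obtain ⟨c, hcU, hc⟩ := hcover _ hm
  have hcase : c ≤ A ∨ B ≤ c := by
    rcases le_or_gt c u with h | h
    · left
      exact le_csSup (finA hUfin u).bddAbove (Set.mem_insert_iff.2 (Or.inr ⟨hcU, h⟩))
    · right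
      exact csInf_le (finB hUfin u).bddBelow (Set.mem_insert_iff.2 (Or.inr ⟨hcU, h.le⟩))
  rcases hcase with h | h
  · have : (A + B)/2 - c ≤ ε / 2 := (abs_le.mp hc).2
    linarith
  · have : -(ε/2) ≤ (A + B)/2 - c := (abs_le.mp hc).1
    linarith

lemma monoA (hUfin : U.Finite) : Monotone (Afun U) := by
  intro a b hab
  exact csSup_le_csSup (finA hUfin b).bddAbove (neA a)
    (Set.insert_subset_insert (Set.inter_subset_inter_right U (Set.Iic_subset_Iic.mpr hab)))

lemma monoB (hUfin : U.Finite) : Monotone (Bfun U) := by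
  intro a b hab
  exact csInf_le_csInf (finB hUfin a).bddBelow (neB b)
    (Set.insert_subset_insert (Set.inter_subset_inter_right U (Set.Ici_subset_Ici.mpr hab)))

lemma measurable_Afun (hUfin : U.Finite) : Measurable (Afun U) := (monoA hUfin).measurable
lemma measurable_Bfun (hUfin : U.Finite) : Measurable (Bfun U) := (monoB hUfin).measurable

lemma measurable_lam (hUfin : U.Finite) : Measurable (lam U) := by
  have hset : MeasurableSet {u : ℝ | Afun U u = Bfun U u} :=
    measurableSet_eq_fun (measurable_Afun hUfin) (measurable_Bfun hUfin)
  exact Measurable.ite hset measurable_const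
    (((measurable_Bfun hUfin).sub measurable_id).div
      ((measurable_Bfun hUfin).sub (measurable_Afun hUfin)))


def wA (U : Set ℝ) (q : ℝ × (ℝ × Bool)) : ℝ :=
  if q.2.2 then lam U q.1 * Afun U q.1 / q.1 else lam U q.1 * (1 - Afun U q.1) / (1 - q.1)

def wB (U : Set ℝ) (q : ℝ × (ℝ × Bool)) : ℝ :=
  if q.2.2 then (1 - lam U q.1) * Bfun U q.1 / q.1
  else (1 - lam U q.1) * (1 - Bfun U q.1) / (1 - q.1)

lemma idA1 (hUfin : U.Finite) (hUsub : U ⊆ Set.Icc (0:ℝ) 1) {u : ℝ}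
    (hu : u ∈ Set.Icc (0:ℝ) 1) :
    u * (lam U u * Afun U u / u) = lam U u * Afun U u := by
  rcases eq_or_ne u 0 with rfl | h
  · simp [Afun_zero hUfin hUsub]
  · rw [mul_comm, div_mul_cancel₀ _ h]

lemma idA0 (hUfin : U.Finite) (hU1 : (1:ℝ) ∈ U) (hUsub : U ⊆ Set.Icc (0:ℝ) 1) {u : ℝ}
    (hu : u ∈ Set.Icc (0:ℝ) 1) :
    (1 - u) * (lam U u * (1 - Afun U u) / (1 - u)) = lam U u * (1 - Afun U u) := by
  rcases eq_or_ne u 1 with rfl | h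
  · simp [Afun_one hUfin hU1 hUsub]
  · rw [mul_comm, div_mul_cancel₀]
    exact sub_ne_zero.mpr (Ne.symm h)

lemma idB1 (hUfin : U.Finite) (hU0 : (0:ℝ) ∈ U) (hUsub : U ⊆ Set.Icc (0:ℝ) 1) {u : ℝ}
    (hu : u ∈ Set.Icc (0:ℝ) 1) :
    u * ((1 - lam U u) * Bfun U u / u) = (1 - lam U u) * Bfun U u := by
  rcases eq_or_ne u 0 with rfl | h
  · simp [Bfun_zero hUfin hU0 hUsub]
  · rw [mul_comm, div_mul_cancel₀ _ h]

lemma idB0 (hUfin : U.Finite) (hUsub : U ⊆ Set.Icc (0:ℝ) 1) {u : ℝ}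
    (hu : u ∈ Set.Icc (0:ℝ) 1) :
    (1 - u) * ((1 - lam U u) * (1 - Bfun U u) / (1 - u)) = (1 - lam U u) * (1 - Bfun U u) := by
  rcases eq_or_ne u 1 with rfl | h
  · simp [Bfun_one hUfin hUsub]
  · rw [mul_comm, div_mul_cancel₀]
    exact sub_ne_zero.mpr (Ne.symm h)

lemma wAB_mem (hUfin : U.Finite) (hUsub : U ⊆ Set.Icc (0:ℝ) 1) {u : ℝ}
    (hu : u ∈ Set.Icc (0:ℝ) 1) (v : ℝ) (y : Bool) :
    wA U (u, (v, y)) ∈ Set.Icc (0:ℝ) 1 ∧ wB U (u, (v, y)) ∈ Set.Icc (0:ℝ) 1 := by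
  have hA0 := Afun_nonneg hUfin u
  have hA1 := Afun_le_one hUsub u
  have hB0 := Bfun_nonneg hUsub u
  have hB1 := Bfun_le_one hUfin u
  have hl := lam_mem hUfin hUsub hu
  have hmix := mix hUfin hUsub hu
  have h1l : 0 ≤ 1 - lam U u := by linarith [hl.2]
  cases y with
  | true =>
    simp only [wA, wB, Bool.false_eq_true, if_false, if_true]
    rcases eq_or_ne u 0 with rfl | h
    · norm_num
    · have hupos : 0 < u := lt_of_le_of_ne hu.1 (Ne.symm h)
      have k1 : 0 ≤ (1 - lam U u) * Bfun U u := mul_nonneg h1l hB0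
      have k2 : 0 ≤ lam U u * Afun U u := mul_nonneg hl.1 hA0
      refine ⟨⟨div_nonneg k2 hu.1, ?_⟩, ⟨div_nonneg k1 hu.1, ?_⟩⟩
      · rw [div_le_one hupos]; linarith
      · rw [div_le_one hupos]; linarith
  | false =>
    simp only [wA, wB, Bool.false_eq_true, if_false, if_true]
    rcases eq_or_ne u 1 with rfl | h
    · norm_num
    · have hpos : 0 < 1 - u := sub_pos.mpr (lt_of_le_of_ne hu.2 h)
      have e1 : lam U u * (1 - Afun U u) = lam U u - lam U u * Afun U u := by ring
      have e2 : (1 - lam U u) * (1 - Bfun U u)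
          = (1 - lam U u) - (1 - lam U u) * Bfun U u := by ring
      have k1 : 0 ≤ (1 - lam U u) * (1 - Bfun U u) := mul_nonneg h1l (by linarith)
      have k2 : 0 ≤ lam U u * (1 - Afun U u) := mul_nonneg hl.1 (by linarith)
      refine ⟨⟨div_nonneg k2 hpos.le, ?_⟩, ⟨div_nonneg k1 hpos.le, ?_⟩⟩
      · rw [div_le_one hpos]; linarith
      · rw [div_le_one hpos]; linarith

lemma wsum (hUfin : U.Finite) (hUsub : U ⊆ Set.Icc (0:ℝ) 1) {u : ℝ}
    (hu : u ∈ Set.Icc (0:ℝ) 1) (v : ℝ) (y : Bool)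
    (h0 : ¬(u = 0 ∧ y = true)) (h1 : ¬(u = 1 ∧ y = false)) :
    wA U (u, (v, y)) + wB U (u, (v, y)) = 1 := by
  have hmix := mix hUfin hUsub hu
  cases y with
  | true =>
    have h : u ≠ 0 := fun hc => h0 ⟨hc, rfl⟩
    simp only [wA, wB, Bool.false_eq_true, if_false, if_true]
    rw [← add_div, hmix, div_self h]
  | false =>
    have h : u ≠ 1 := fun hc => h1 ⟨hc, rfl⟩
    have hne : (1:ℝ) - u ≠ 0 := sub_ne_zero.mpr (Ne.symm h)
    simp only [wA, wB, Bool.false_eq_true, if_false, if_true]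
    rw [← add_div]
    have hnum : lam U u * (1 - Afun U u) + (1 - lam U u) * (1 - Bfun U u)
        = 1 - (lam U u * Afun U u + (1 - lam U u) * Bfun U u) := by ring
    rw [hnum, hmix, div_self hne]

lemma measYtrue : MeasurableSet {q : ℝ × (ℝ × Bool) | q.2.2 = true} :=
  (measurable_snd.snd) (measurableSet_singleton true)

lemma measurable_wA (hUfin : U.Finite) : Measurable (wA U) := by
  refine Measurable.ite measYtrue ?_ ?_
  · exact (((measurable_lam hUfin).mul (measurable_Afun hUfin)).div measurable_id).comp
      measurable_fst
  · exact (((measurable_lam hUfin).mul ((measurable_const.sub (measurable_Afun hUfin)))).div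
      (measurable_const.sub measurable_id)).comp measurable_fst

lemma measurable_wB (hUfin : U.Finite) : Measurable (wB U) := by
  refine Measurable.ite measYtrue ?_ ?_
  · exact (((measurable_const.sub (measurable_lam hUfin)).mul (measurable_Bfun hUfin)).div
      measurable_id).comp measurable_fst
  · exact (((measurable_const.sub (measurable_lam hUfin)).mul
      ((measurable_const.sub (measurable_Bfun hUfin)))).div
      (measurable_const.sub measurable_id)).comp measurable_fst



lemma master {π : Measure (ℝ × (ℝ × Bool))} [IsProbabilityMeasure π]
    (hae : ∀ᵐ q ∂π, q.1 ∈ Set.Icc (0:ℝ) 1)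
    (hcal : ∀ S : Set ℝ, MeasurableSet S →
      (∫ p in {p : ℝ × (ℝ × Bool) | p.1 ∈ S}, yval p.2.2 ∂π) =
        ∫ p in {p : ℝ × (ℝ × Bool) | p.1 ∈ S}, p.1 ∂π)
    {g : ℝ → ℝ} (hg : Measurable g) :
    ∫ q, yval q.2.2 * g q.1 ∂π = ∫ q, q.1 * g q.1 ∂π := by
  set Ytrue : Set (ℝ × (ℝ × Bool)) := {q : ℝ × (ℝ × Bool) | q.2.2 = true} with hYdef
  have hYmeas : MeasurableSet Ytrue := measYtrue
  set ν₁ := (π.restrict Ytrue).map Prod.fst with hν₁def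
  set ν₂ := (π.withDensity fun q => ENNReal.ofReal q.1).map Prod.fst with hν₂def
  have hν : ν₁ = ν₂ := by
    ext S hS
    have hT : MeasurableSet {p : ℝ × (ℝ × Bool) | p.1 ∈ S} := measurable_fst hS
    have e1 : ν₁ S = π ({p : ℝ × (ℝ × Bool) | p.1 ∈ S} ∩ Ytrue) := by
      rw [hν₁def, Measure.map_apply measurable_fst hS,
        show (Prod.fst ⁻¹' S : Set (ℝ × (ℝ × Bool))) = {p : ℝ × (ℝ × Bool) | p.1 ∈ S} from rfl,
        Measure.restrict_apply hT]
    have e2 : ν₂ S = ∫⁻ q in {p : ℝ × (ℝ × Bool) | p.1 ∈ S}, ENNReal.ofReal q.1 ∂π := by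
      rw [hν₂def, Measure.map_apply measurable_fst hS,
        show (Prod.fst ⁻¹' S : Set (ℝ × (ℝ × Bool))) = {p : ℝ × (ℝ × Bool) | p.1 ∈ S} from rfl,
        withDensity_apply _ hT]
    have e3 : (∫ p in {p : ℝ × (ℝ × Bool) | p.1 ∈ S}, yval p.2.2 ∂π)
        = (π ({p : ℝ × (ℝ × Bool) | p.1 ∈ S} ∩ Ytrue)).toReal := by
      have hpt : ∀ p : ℝ × (ℝ × Bool),
          yval p.2.2 = Set.indicator Ytrue (fun _ => (1:ℝ)) p := by
        intro p
        by_cases h : p.2.2 = true <;>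
          simp [yval, Set.indicator, hYdef, h]
      calc (∫ p in {p : ℝ × (ℝ × Bool) | p.1 ∈ S}, yval p.2.2 ∂π)
          = ∫ p in {p : ℝ × (ℝ × Bool) | p.1 ∈ S},
              Set.indicator Ytrue (fun _ => (1:ℝ)) p ∂π :=
            integral_congr_ae (Filter.Eventually.of_forall fun p => hpt p)
        _ = ((π.restrict {p : ℝ × (ℝ × Bool) | p.1 ∈ S}) Ytrue).toReal • (1:ℝ) :=
            integral_indicator_const (1:ℝ) hYmeas
        _ = (π ({p : ℝ × (ℝ × Bool) | p.1 ∈ S} ∩ Ytrue)).toReal := by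
            rw [Measure.restrict_apply hYmeas, Set.inter_comm]
            simp
    have e4 : (∫ p in {p : ℝ × (ℝ × Bool) | p.1 ∈ S}, p.1 ∂π)
        = (∫⁻ q in {p : ℝ × (ℝ × Bool) | p.1 ∈ S}, ENNReal.ofReal q.1 ∂π).toReal := by
      rw [integral_eq_lintegral_of_nonneg_ae
        (ae_restrict_of_ae (hae.mono fun q h => h.1))
        measurable_fst.aestronglyMeasurable]
    have hkey := hcal S hS
    rw [e3, e4] at hkey
    have hfin1 : π ({p : ℝ × (ℝ × Bool) | p.1 ∈ S} ∩ Ytrue) ≠ ⊤ := measure_ne_top _ _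
    have hfin2 : (∫⁻ q in {p : ℝ × (ℝ × Bool) | p.1 ∈ S}, ENNReal.ofReal q.1 ∂π) ≠ ⊤ := by
      have hle : (∫⁻ q in {p : ℝ × (ℝ × Bool) | p.1 ∈ S}, ENNReal.ofReal q.1 ∂π)
          ≤ ∫⁻ q, 1 ∂π := by
        refine le_trans (lintegral_mono' Measure.restrict_le_self le_rfl) ?_
        refine lintegral_mono_ae (hae.mono fun q h => ?_)
        exact ENNReal.ofReal_le_one.mpr h.2
      have : (∫⁻ q, (1:ENNReal) ∂π) = 1 := by simp
      rw [this] at hle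
      exact ne_top_of_le_ne_top ENNReal.one_ne_top hle
    rw [e1, e2]
    exact (ENNReal.toReal_eq_toReal_iff' hfin1 hfin2).mp hkey
  have hB1 : ∫ q, yval q.2.2 * g q.1 ∂π = ∫ u, g u ∂ν₁ := by
    rw [hν₁def, integral_map measurable_fst.aemeasurable hg.aestronglyMeasurable,
      ← integral_indicator hYmeas]
    refine integral_congr_ae (Filter.Eventually.of_forall fun q => ?_)
    by_cases h : q.2.2 = true <;> simp [yval, Set.indicator, hYdef, h]
  have hB2 : ∫ q, q.1 * g q.1 ∂π = ∫ u, g u ∂ν₂ := by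
    rw [hν₂def, integral_map measurable_fst.aemeasurable hg.aestronglyMeasurable]
    have hcoe : (fun q : ℝ × (ℝ × Bool) => ENNReal.ofReal q.1)
        = fun q : ℝ × (ℝ × Bool) => ((Real.toNNReal q.1 : NNReal) : ENNReal) := rfl
    rw [hcoe, integral_withDensity_eq_integral_smul measurable_fst.real_toNNReal
      (fun q : ℝ × (ℝ × Bool) => g q.1)]
    refine integral_congr_ae (hae.mono fun q hq => ?_)
    simp [NNReal.smul_def, Real.coe_toNNReal _ hq.1]
  rw [hB1, hB2, hν]


lemma intP {π : Measure (ℝ × (ℝ × Bool))} [IsFiniteMeasure π]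
    {h : ℝ × (ℝ × Bool) → ℝ} (hh : AEStronglyMeasurable h π) (C : ℝ)
    (hb : ∀ᵐ q ∂π, |h q| ≤ C) : Integrable h π :=
  Integrable.mono' (integrable_const C) hh (by simpa [Real.norm_eq_abs] using hb)

lemma round_ext (U : Set ℝ) (hUfin : U.Finite) (hU0 : (0:ℝ) ∈ U) (hU1 : (1:ℝ) ∈ U)
    (hUsub : U ⊆ Set.Icc (0:ℝ) 1) {ε : ℝ} (hε : 0 < ε)
    (hcover : ∀ x ∈ Set.Icc (0 : ℝ) 1, ∃ y ∈ U, |x - y| ≤ ε / 2)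
    {π : Measure (ℝ × (ℝ × Bool))} [IsProbabilityMeasure π]
    (hmarg : ∀ᵐ q ∂π, q.2.1 ∈ Set.Icc (0:ℝ) 1)
    (hae : ∀ᵐ q ∂π, q.1 ∈ Set.Icc (0:ℝ) 1)
    (hcal : ∀ S : Set ℝ, MeasurableSet S →
      (∫ p in {p : ℝ × (ℝ × Bool) | p.1 ∈ S}, yval p.2.2 ∂π) =
        ∫ p in {p : ℝ × (ℝ × Bool) | p.1 ∈ S}, p.1 ∂π) :
    ∃ π' : Measure (ℝ × (ℝ × Bool)),
      IsProbabilityMeasure π' ∧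
      π'.map Prod.snd = π.map Prod.snd ∧
      (∀ᵐ p ∂π', p.1 ∈ U) ∧
      (∀ S : Set ℝ, MeasurableSet S →
        (∫ p in {p : ℝ × (ℝ × Bool) | p.1 ∈ S}, yval p.2.2 ∂π') =
          ∫ p in {p : ℝ × (ℝ × Bool) | p.1 ∈ S}, p.1 ∂π') ∧
      ∫ p, |p.1 - p.2.1| ∂π' ≤ (∫ p, |p.1 - p.2.1| ∂π) + ε := by
  classical
  -- null corner events
  have hnull0 : ∀ᵐ q ∂π, ¬(q.1 = 0 ∧ q.2.2 = true) := by
    set J0 : ℝ → ℝ := fun t => if t = 0 then 1 else 0 with hJ0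
    have hJ0m : Measurable J0 := by
      refine Measurable.ite ?_ measurable_const measurable_const
      exact measurableSet_eq
    have hm := master hae hcal hJ0m
    have hz : ∫ q : ℝ × (ℝ × Bool), q.1 * J0 q.1 ∂π = 0 := by
      have : ∀ q : ℝ × (ℝ × Bool), q.1 * J0 q.1 = 0 := by
        intro q; by_cases h : q.1 = 0 <;> simp [hJ0, h]
      simp [this]
    rw [hz] at hm
    have hnn : 0 ≤ᵐ[π] fun q : ℝ × (ℝ × Bool) => yval q.2.2 * J0 q.1 := by
      refine Filter.Eventually.of_forall fun q => ?_
      have h1 : 0 ≤ yval q.2.2 := by cases q.2.2 <;> simp [yval]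
      have h2 : 0 ≤ J0 q.1 := by by_cases h : q.1 = 0 <;> simp [hJ0, h]
      exact mul_nonneg h1 h2
    have hint : Integrable (fun q : ℝ × (ℝ × Bool) => yval q.2.2 * J0 q.1) π := by
      refine intP ?_ 1 ?_
      · exact (((Measurable.of_discrete (f := yval)).comp measurable_snd.snd).mul
          (hJ0m.comp measurable_fst)).aestronglyMeasurable
      · refine Filter.Eventually.of_forall fun q => ?_
        have h1 : |yval q.2.2| ≤ 1 := by cases q.2.2 <;> simp [yval]
        have h2 : |J0 q.1| ≤ 1 := by by_cases h : q.1 = 0 <;> simp [hJ0, h]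
        calc |yval q.2.2 * J0 q.1| = |yval q.2.2| * |J0 q.1| := abs_mul _ _
        _ ≤ 1 * 1 := mul_le_mul h1 h2 (abs_nonneg _) zero_le_one
        _ = 1 := by norm_num
    have hzero := (integral_eq_zero_iff_of_nonneg_ae hnn hint).mp hm
    refine hzero.mono fun q hq => ?_
    rintro ⟨h1, h2⟩
    simp [yval, h1, h2, hJ0] at hq
  have hnull1 : ∀ᵐ q ∂π, ¬(q.1 = 1 ∧ q.2.2 = false) := by
    set J1 : ℝ → ℝ := fun t => if t = 1 then 1 else 0 with hJ1
    have hJ1m : Measurable J1 := by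
      refine Measurable.ite ?_ measurable_const measurable_const
      exact measurableSet_eq
    have hJ1b : ∀ t, 0 ≤ J1 t ∧ |J1 t| ≤ 1 := by
      intro t; by_cases h : t = 1 <;> simp [hJ1, h]
    have hyb : ∀ b, 0 ≤ yval b ∧ |yval b| ≤ 1 := by
      intro b; cases b <;> simp [yval]
    have hm := master hae hcal hJ1m
    have hint1 : Integrable (fun q : ℝ × (ℝ × Bool) => J1 q.1) π := by
      refine intP (hJ1m.comp measurable_fst).aestronglyMeasurable 1 ?_
      exact Filter.Eventually.of_forall fun q => (hJ1b q.1).2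
    have hint2 : Integrable (fun q : ℝ × (ℝ × Bool) => yval q.2.2 * J1 q.1) π := by
      refine intP (((Measurable.of_discrete (f := yval)).comp measurable_snd.snd).mul
          (hJ1m.comp measurable_fst)).aestronglyMeasurable 1 ?_
      refine Filter.Eventually.of_forall fun q => ?_
      calc |yval q.2.2 * J1 q.1| = |yval q.2.2| * |J1 q.1| := abs_mul _ _
      _ ≤ 1 * 1 := mul_le_mul (hyb q.2.2).2 (hJ1b q.1).2 (abs_nonneg _) zero_le_one
      _ = 1 := by norm_num
    have hz : ∫ q : ℝ × (ℝ × Bool), (1 - yval q.2.2) * J1 q.1 ∂π = 0 := by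
      rw [show (fun q : ℝ × (ℝ × Bool) => (1 - yval q.2.2) * J1 q.1)
          = fun q : ℝ × (ℝ × Bool) => J1 q.1 - yval q.2.2 * J1 q.1 from by funext q; ring]
      rw [integral_sub hint1 hint2, hm]
      have : ∀ q : ℝ × (ℝ × Bool), q.1 * J1 q.1 = J1 q.1 := by
        intro q; by_cases h : q.1 = 1 <;> simp [hJ1, h]
      rw [show (fun q : ℝ × (ℝ × Bool) => q.1 * J1 q.1)
          = fun q : ℝ × (ℝ × Bool) => J1 q.1 from funext this]
      ring
    have hnn : 0 ≤ᵐ[π] fun q : ℝ × (ℝ × Bool) => (1 - yval q.2.2) * J1 q.1 := by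
      refine Filter.Eventually.of_forall fun q => ?_
      have h1 : yval q.2.2 ≤ 1 := by cases q.2.2 <;> simp [yval]
      exact mul_nonneg (by linarith) (hJ1b q.1).1
    have hint3 : Integrable (fun q : ℝ × (ℝ × Bool) => (1 - yval q.2.2) * J1 q.1) π := by
      rw [show (fun q : ℝ × (ℝ × Bool) => (1 - yval q.2.2) * J1 q.1)
          = fun q : ℝ × (ℝ × Bool) => J1 q.1 - yval q.2.2 * J1 q.1 from by funext q; ring]
      exact hint1.sub hint2
    have hzero := (integral_eq_zero_iff_of_nonneg_ae hnn hint3).mp hz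
    refine hzero.mono fun q hq => ?_
    rintro ⟨h1, h2⟩
    simp [yval, h1, h2, hJ1] at hq
  have hgood : ∀ᵐ q ∂π, q.1 ∈ Set.Icc (0:ℝ) 1 ∧ ¬(q.1 = 0 ∧ q.2.2 = true)
      ∧ ¬(q.1 = 1 ∧ q.2.2 = false) := hae.and (hnull0.and hnull1)
  -- w facts
  have hw : ∀ᵐ q ∂π, wA U q ∈ Set.Icc (0:ℝ) 1 ∧ wB U q ∈ Set.Icc (0:ℝ) 1 := by
    refine hae.mono fun q hq => ?_
    have := wAB_mem hUfin hUsub hq q.2.1 q.2.2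
    simpa using this
  have hsum : ∀ᵐ q ∂π, wA U q + wB U q = 1 := by
    refine hgood.mono fun q hq => ?_
    have := wsum hUfin hUsub hq.1 q.2.1 q.2.2 (by simpa using hq.2.1) (by simpa using hq.2.2)
    simpa using this
  -- the rounded measure
  set FA : ℝ × (ℝ × Bool) → ℝ × (ℝ × Bool) := fun q => (Afun U q.1, q.2) with hFA
  set FB : ℝ × (ℝ × Bool) → ℝ × (ℝ × Bool) := fun q => (Bfun U q.1, q.2) with hFB
  have measFA : Measurable FA :=
    (((measurable_Afun hUfin).comp measurable_fst).prodMk measurable_snd)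
  have measFB : Measurable FB :=
    (((measurable_Bfun hUfin).comp measurable_fst).prodMk measurable_snd)
  have measdA : Measurable fun q => Real.toNNReal (wA U q) := (measurable_wA hUfin).real_toNNReal
  have measdB : Measurable fun q => Real.toNNReal (wB U q) := (measurable_wB hUfin).real_toNNReal
  set π₁ : Measure (ℝ × (ℝ × Bool)) :=
    (π.withDensity fun q => ((Real.toNNReal (wA U q) : NNReal) : ENNReal)).map FA with hπ₁
  set π₂ : Measure (ℝ × (ℝ × Bool)) :=
    (π.withDensity fun q => ((Real.toNNReal (wB U q) : NNReal) : ENNReal)).map FB with hπ₂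
  set π' : Measure (ℝ × (ℝ × Bool)) := π₁ + π₂ with hπ'
  -- integrability transfer
  have int1 : ∀ (f : ℝ × (ℝ × Bool) → ℝ), Measurable f → ∀ C : ℝ,
      (∀ᵐ q ∂π, |f (FA q)| ≤ C) → Integrable f π₁ := by
    intro f hf C hb
    rw [hπ₁, integrable_map_measure hf.aestronglyMeasurable measFA.aemeasurable,
      integrable_withDensity_iff_integrable_smul measdA]
    refine Integrable.mono' (integrable_const C)
      ((measdA.coe_nnreal_real.mul (hf.comp measFA)).aestronglyMeasurable.congr ?_) ?_
    · exact Filter.Eventually.of_forall fun q => by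
        simp [NNReal.smul_def]
    · refine (hw.and hb).mono fun q ⟨hwq, hbq⟩ => ?_
      have h1 : ((Real.toNNReal (wA U q) : NNReal) : ℝ) = wA U q :=
        Real.coe_toNNReal _ hwq.1.1
      rw [Real.norm_eq_abs, NNReal.smul_def, smul_eq_mul, abs_mul, h1,
        abs_of_nonneg hwq.1.1]
      calc wA U q * |f (FA q)| ≤ 1 * C :=
        mul_le_mul hwq.1.2 hbq (abs_nonneg _) zero_le_one
      _ = C := one_mul C
  have int2 : ∀ (f : ℝ × (ℝ × Bool) → ℝ), Measurable f → ∀ C : ℝ,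
      (∀ᵐ q ∂π, |f (FB q)| ≤ C) → Integrable f π₂ := by
    intro f hf C hb
    rw [hπ₂, integrable_map_measure hf.aestronglyMeasurable measFB.aemeasurable,
      integrable_withDensity_iff_integrable_smul measdB]
    refine Integrable.mono' (integrable_const C)
      ((measdB.coe_nnreal_real.mul (hf.comp measFB)).aestronglyMeasurable.congr ?_) ?_
    · exact Filter.Eventually.of_forall fun q => by
        simp [NNReal.smul_def]
    · refine (hw.and hb).mono fun q ⟨hwq, hbq⟩ => ?_
      have h1 : ((Real.toNNReal (wB U q) : NNReal) : ℝ) = wB U q :=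
        Real.coe_toNNReal _ hwq.2.1
      rw [Real.norm_eq_abs, NNReal.smul_def, smul_eq_mul, abs_mul, h1,
        abs_of_nonneg hwq.2.1]
      calc wB U q * |f (FB q)| ≤ 1 * C :=
        mul_le_mul hwq.2.2 hbq (abs_nonneg _) zero_le_one
      _ = C := one_mul C
  -- Bochner transfer
  have eq1 : ∀ (f : ℝ × (ℝ × Bool) → ℝ), Measurable f →
      ∫ p, f p ∂π₁ = ∫ q, wA U q * f (FA q) ∂π := by
    intro f hf
    rw [hπ₁, integral_map measFA.aemeasurable hf.aestronglyMeasurable,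
      integral_withDensity_eq_integral_smul measdA (fun q => f (FA q))]
    refine integral_congr_ae (hw.mono fun q hwq => ?_)
    simp [NNReal.smul_def, Real.coe_toNNReal _ hwq.1.1]
  have eq2 : ∀ (f : ℝ × (ℝ × Bool) → ℝ), Measurable f →
      ∫ p, f p ∂π₂ = ∫ q, wB U q * f (FB q) ∂π := by
    intro f hf
    rw [hπ₂, integral_map measFB.aemeasurable hf.aestronglyMeasurable,
      integral_withDensity_eq_integral_smul measdB (fun q => f (FB q))]
    refine integral_congr_ae (hw.mono fun q hwq => ?_)
    simp [NNReal.smul_def, Real.coe_toNNReal _ hwq.2.1]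
  have total : ∀ (f : ℝ × (ℝ × Bool) → ℝ), Measurable f → ∀ C : ℝ,
      (∀ᵐ q ∂π, |f (FA q)| ≤ C) → (∀ᵐ q ∂π, |f (FB q)| ≤ C) →
      ∫ p, f p ∂π' = (∫ q, wA U q * f (FA q) ∂π) + ∫ q, wB U q * f (FB q) ∂π := by
    intro f hf C hbA hbB
    rw [hπ', integral_add_measure (int1 f hf C hbA) (int2 f hf C hbB), eq1 f hf, eq2 f hf]
  -- probability
  have hmass : π' Set.univ = 1 := by
    rw [hπ', Measure.add_apply, hπ₁, hπ₂,
      Measure.map_apply measFA MeasurableSet.univ,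
      Measure.map_apply measFB MeasurableSet.univ]
    simp only [Set.preimage_univ]
    rw [withDensity_apply _ MeasurableSet.univ, withDensity_apply _ MeasurableSet.univ]
    simp only [Measure.restrict_univ]
    rw [← lintegral_add_left (measdA.coe_nnreal_ennreal)]
    have hone : ∫⁻ q, (1 : ENNReal) ∂π = 1 := by simp
    rw [← hone]
    refine lintegral_congr_ae ((hw.and hsum).mono fun q ⟨hwq, hsq⟩ => ?_)
    show ENNReal.ofReal (wA U q) + ENNReal.ofReal (wB U q) = 1
    rw [← ENNReal.ofReal_add hwq.1.1 hwq.2.1, hsq, ENNReal.ofReal_one]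
  have hprob' : IsProbabilityMeasure π' := ⟨hmass⟩
  -- marginal
  have hmarg' : π'.map Prod.snd = π.map Prod.snd := by
    rw [hπ', Measure.map_add _ _ measurable_snd, hπ₁, hπ₂,
      Measure.map_map measurable_snd measFA, Measure.map_map measurable_snd measFB]
    have h1 : (Prod.snd ∘ FA) = (Prod.snd : ℝ × (ℝ × Bool) → ℝ × Bool) := rfl
    have h2 : (Prod.snd ∘ FB) = (Prod.snd : ℝ × (ℝ × Bool) → ℝ × Bool) := rfl
    rw [h1, h2, ← Measure.map_add _ _ measurable_snd,
      ← withDensity_add_right _ measdB.coe_nnreal_ennreal,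
      show ((fun q => ((Real.toNNReal (wA U q) : NNReal) : ENNReal))
          + fun q => ((Real.toNNReal (wB U q) : NNReal) : ENNReal))
        = (fun q => ((Real.toNNReal (wA U q) : NNReal) : ENNReal)
          + ((Real.toNNReal (wB U q) : NNReal) : ENNReal)) from rfl]
    have : π.withDensity (fun q => ((Real.toNNReal (wA U q) : NNReal) : ENNReal)
        + ((Real.toNNReal (wB U q) : NNReal) : ENNReal)) = π := by
      have h1 : π.withDensity (fun q => ((Real.toNNReal (wA U q) : NNReal) : ENNReal)
          + ((Real.toNNReal (wB U q) : NNReal) : ENNReal)) = π.withDensity 1 := by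
        refine withDensity_congr_ae ((hw.and hsum).mono fun q ⟨hwq, hsq⟩ => ?_)
        show ENNReal.ofReal (wA U q) + ENNReal.ofReal (wB U q) = (1 : ℝ × (ℝ × Bool) → ENNReal) q
        rw [Pi.one_apply, ← ENNReal.ofReal_add hwq.1.1 hwq.2.1, hsq, ENNReal.ofReal_one]
      rw [h1, withDensity_one]
    rw [this]
  -- a.e. in U
  have hU' : ∀ᵐ p ∂π', p.1 ∈ U := by
    have hUm : MeasurableSet U := hUfin.measurableSet
    have hset : MeasurableSet {p : ℝ × (ℝ × Bool) | p.1 ∉ U} :=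
      (measurable_fst hUm).compl
    rw [ae_iff]
    have hsub1 : FA ⁻¹' {p : ℝ × (ℝ × Bool) | p.1 ∉ U} = ∅ := by
      ext q; simp [hFA, Afun_mem hUfin hU0 q.1]
    have hsub2 : FB ⁻¹' {p : ℝ × (ℝ × Bool) | p.1 ∉ U} = ∅ := by
      ext q; simp [hFB, Bfun_mem hUfin hU1 q.1]
    have e : {a : ℝ × (ℝ × Bool) | ¬a.1 ∈ U} = {p : ℝ × (ℝ × Bool) | p.1 ∉ U} := rfl
    rw [e, hπ', Measure.add_apply, hπ₁, hπ₂, Measure.map_apply measFA hset,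
      Measure.map_apply measFB hset, hsub1, hsub2]
    simp
  -- calibration of the rounded measure
  have hcal' : ∀ S : Set ℝ, MeasurableSet S →
      (∫ p in {p : ℝ × (ℝ × Bool) | p.1 ∈ S}, yval p.2.2 ∂π') =
        ∫ p in {p : ℝ × (ℝ × Bool) | p.1 ∈ S}, p.1 ∂π' := by
    intro S hS
    have hT : MeasurableSet {p : ℝ × (ℝ × Bool) | p.1 ∈ S} := measurable_fst hS
    set J : ℝ → ℝ := S.indicator fun _ => 1 with hJ
    have hJm : Measurable J := measurable_const.indicator hS
    have hJb : ∀ t, 0 ≤ J t ∧ J t ≤ 1 := fun t => by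
      by_cases h : t ∈ S <;> simp [hJ, Set.indicator_apply, h]
    set fY : ℝ × (ℝ × Bool) → ℝ :=
      fun p => Set.indicator {p : ℝ × (ℝ × Bool) | p.1 ∈ S} (fun p => yval p.2.2) p with hfY
    set fU : ℝ × (ℝ × Bool) → ℝ :=
      fun p => Set.indicator {p : ℝ × (ℝ × Bool) | p.1 ∈ S} (fun p => p.1) p with hfU
    have hfYm : Measurable fY :=
      ((Measurable.of_discrete (f := yval)).comp measurable_snd.snd).indicator hT
    have hfUm : Measurable fU := measurable_fst.indicator hT
    have hyb : ∀ b, 0 ≤ yval b ∧ yval b ≤ 1 := fun b => by cases b <;> simp [yval]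
    have hfYb : ∀ p, |fY p| ≤ 1 := by
      intro p
      simp only [hfY, Set.indicator_apply]
      split
      · exact abs_le.mpr ⟨by linarith [(hyb p.2.2).1], (hyb p.2.2).2⟩
      · simp
    have hfUbA : ∀ q : ℝ × (ℝ × Bool), |fU (FA q)| ≤ 1 := by
      intro q
      simp only [hfU, hFA, Set.indicator_apply]
      split
      · exact abs_le.mpr ⟨by linarith [Afun_nonneg hUfin q.1], Afun_le_one hUsub q.1⟩
      · simp
    have hfUbB : ∀ q : ℝ × (ℝ × Bool), |fU (FB q)| ≤ 1 := by
      intro q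
      simp only [hfU, hFB, Set.indicator_apply]
      split
      · exact abs_le.mpr ⟨by linarith [Bfun_nonneg hUsub q.1], Bfun_le_one hUfin q.1⟩
      · simp
    rw [← integral_indicator hT, ← integral_indicator hT]
    rw [total fY hfYm 1 (Filter.Eventually.of_forall fun q => hfYb (FA q))
        (Filter.Eventually.of_forall fun q => hfYb (FB q)),
      total fU hfUm 1 (Filter.Eventually.of_forall hfUbA)
        (Filter.Eventually.of_forall hfUbB)]
    have habs : ∀ (w x : ℝ), w ∈ Set.Icc (0:ℝ) 1 → |x| ≤ 1 → |w * x| ≤ 1 := by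
      intro w x hwm hx
      rw [abs_mul, abs_of_nonneg hwm.1]
      calc w * |x| ≤ 1 * 1 := mul_le_mul hwm.2 hx (abs_nonneg _) zero_le_one
      _ = 1 := one_mul 1
    have iYA : Integrable (fun q => wA U q * fY (FA q)) π :=
      intP ((measurable_wA hUfin).mul (hfYm.comp measFA)).aestronglyMeasurable 1
        (hw.mono fun q hwq => habs _ _ hwq.1 (hfYb (FA q)))
    have iYB : Integrable (fun q => wB U q * fY (FB q)) π :=
      intP ((measurable_wB hUfin).mul (hfYm.comp measFB)).aestronglyMeasurable 1
        (hw.mono fun q hwq => habs _ _ hwq.2 (hfYb (FB q)))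
    have iUA : Integrable (fun q => wA U q * fU (FA q)) π :=
      intP ((measurable_wA hUfin).mul (hfUm.comp measFA)).aestronglyMeasurable 1
        (hw.mono fun q hwq => habs _ _ hwq.1 (hfUbA q))
    have iUB : Integrable (fun q => wB U q * fU (FB q)) π :=
      intP ((measurable_wB hUfin).mul (hfUm.comp measFB)).aestronglyMeasurable 1
        (hw.mono fun q hwq => habs _ _ hwq.2 (hfUbB q))
    rw [← sub_eq_zero]
    have hre : (∫ q, wA U q * fY (FA q) ∂π) + (∫ q, wB U q * fY (FB q) ∂π)
        - ((∫ q, wA U q * fU (FA q) ∂π) + (∫ q, wB U q * fU (FB q) ∂π))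
        = ∫ q, (wA U q * (fY (FA q) - fU (FA q))
            + wB U q * (fY (FB q) - fU (FB q))) ∂π := by
      calc (∫ q, wA U q * fY (FA q) ∂π) + (∫ q, wB U q * fY (FB q) ∂π)
          - ((∫ q, wA U q * fU (FA q) ∂π) + (∫ q, wB U q * fU (FB q) ∂π))
          = ((∫ q, wA U q * fY (FA q) ∂π) - ∫ q, wA U q * fU (FA q) ∂π)
            + ((∫ q, wB U q * fY (FB q) ∂π) - ∫ q, wB U q * fU (FB q) ∂π) := by ring
        _ = (∫ q, (wA U q * fY (FA q) - wA U q * fU (FA q)) ∂π)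
            + ∫ q, (wB U q * fY (FB q) - wB U q * fU (FB q)) ∂π := by
            rw [integral_sub iYA iUA, integral_sub iYB iUB]
        _ = ∫ q, ((wA U q * fY (FA q) - wA U q * fU (FA q))
            + (wB U q * fY (FB q) - wB U q * fU (FB q))) ∂π :=
            (integral_add (iYA.sub iUA) (iYB.sub iUB)).symm
        _ = ∫ q, (wA U q * (fY (FA q) - fU (FA q))
            + wB U q * (fY (FB q) - fU (FB q))) ∂π := by
            refine integral_congr_ae (Filter.Eventually.of_forall fun q => ?_)
            ring
    rw [hre]
    set G1 : ℝ → ℝ := fun u => wA U (u, (0, true)) * (J (Afun U u) * (1 - Afun U u))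
        + wB U (u, (0, true)) * (J (Bfun U u) * (1 - Bfun U u)) with hG1
    set G0 : ℝ → ℝ := fun u => wA U (u, (0, false)) * (J (Afun U u) * (0 - Afun U u))
        + wB U (u, (0, false)) * (J (Bfun U u) * (0 - Bfun U u)) with hG0
    have hwc1 : Measurable fun u : ℝ => wA U (u, (0, true)) :=
      (measurable_wA hUfin).comp (measurable_id.prodMk measurable_const)
    have hwc2 : Measurable fun u : ℝ => wB U (u, (0, true)) :=
      (measurable_wB hUfin).comp (measurable_id.prodMk measurable_const)
    have hwc3 : Measurable fun u : ℝ => wA U (u, (0, false)) :=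
      (measurable_wA hUfin).comp (measurable_id.prodMk measurable_const)
    have hwc4 : Measurable fun u : ℝ => wB U (u, (0, false)) :=
      (measurable_wB hUfin).comp (measurable_id.prodMk measurable_const)
    have hG1m : Measurable G1 := by
      refine (hwc1.mul ((hJm.comp (measurable_Afun hUfin)).mul
        (measurable_const.sub (measurable_Afun hUfin)))).add
        (hwc2.mul ((hJm.comp (measurable_Bfun hUfin)).mul
        (measurable_const.sub (measurable_Bfun hUfin))))
    have hG0m : Measurable G0 := by
      refine (hwc3.mul ((hJm.comp (measurable_Afun hUfin)).mul
        (measurable_const.sub (measurable_Afun hUfin)))).add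
        (hwc4.mul ((hJm.comp (measurable_Bfun hUfin)).mul
        (measurable_const.sub (measurable_Bfun hUfin))))
    have hdecomp : ∀ q : ℝ × (ℝ × Bool),
        wA U q * (fY (FA q) - fU (FA q)) + wB U q * (fY (FB q) - fU (FB q))
        = yval q.2.2 * G1 q.1 + (1 - yval q.2.2) * G0 q.1 := by
      rintro ⟨u, v, y⟩
      cases y <;>
      · simp only [hG1, hG0, hfY, hfU, hFA, hFB, wA, wB, yval, hJ, Set.indicator_apply,
          Set.mem_setOf_eq, Bool.false_eq_true, if_true, if_false]
        by_cases hA : Afun U u ∈ S <;> by_cases hB : Bfun U u ∈ S <;>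
          simp only [hA, hB, if_true, if_false] <;> ring
    have hzero : ∀ u ∈ Set.Icc (0:ℝ) 1, u * G1 u + (1 - u) * G0 u = 0 := by
      intro u hu
      have e1 := idA1 hUfin hUsub hu
      have e2 := idA0 hUfin hU1 hUsub hu
      have e3 := idB1 hUfin hU0 hUsub hu
      have e4 := idB0 hUfin hUsub hu
      have expand : u * G1 u + (1 - u) * G0 u
          = J (Afun U u) * ((u * (lam U u * Afun U u / u)) * (1 - Afun U u)
              + ((1 - u) * (lam U u * (1 - Afun U u) / (1 - u))) * (0 - Afun U u))
            + J (Bfun U u) * ((u * ((1 - lam U u) * Bfun U u / u)) * (1 - Bfun U u)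
              + ((1 - u) * ((1 - lam U u) * (1 - Bfun U u) / (1 - u))) * (0 - Bfun U u)) := by
        simp only [hG1, hG0, wA, wB, if_true, Bool.false_eq_true, if_false]
        ring
      rw [expand, e1, e2, e3, e4]
      ring
    have hG1b : ∀ u ∈ Set.Icc (0:ℝ) 1, |G1 u| ≤ 2 := by
      intro u hu
      obtain ⟨hwa, hwb⟩ := wAB_mem hUfin hUsub hu 0 true
      have hA0 := Afun_nonneg hUfin u; have hA1 := Afun_le_one hUsub u
      have hB0 := Bfun_nonneg hUsub u; have hB1 := Bfun_le_one hUfin u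
      have k1 : 0 ≤ J (Afun U u) * (1 - Afun U u) := mul_nonneg (hJb _).1 (by linarith)
      have k1' : J (Afun U u) * (1 - Afun U u) ≤ 1 :=
        mul_le_one₀ (hJb _).2 (by linarith) (by linarith)
      have k2 : 0 ≤ J (Bfun U u) * (1 - Bfun U u) := mul_nonneg (hJb _).1 (by linarith)
      have k2' : J (Bfun U u) * (1 - Bfun U u) ≤ 1 :=
        mul_le_one₀ (hJb _).2 (by linarith) (by linarith)
      have t1 : 0 ≤ wA U (u, (0, true)) * (J (Afun U u) * (1 - Afun U u)) :=
        mul_nonneg hwa.1 k1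
      have t1' : wA U (u, (0, true)) * (J (Afun U u) * (1 - Afun U u)) ≤ 1 :=
        mul_le_one₀ hwa.2 k1 k1'
      have t2 : 0 ≤ wB U (u, (0, true)) * (J (Bfun U u) * (1 - Bfun U u)) :=
        mul_nonneg hwb.1 k2
      have t2' : wB U (u, (0, true)) * (J (Bfun U u) * (1 - Bfun U u)) ≤ 1 :=
        mul_le_one₀ hwb.2 k2 k2'
      have : G1 u = wA U (u, (0, true)) * (J (Afun U u) * (1 - Afun U u))
          + wB U (u, (0, true)) * (J (Bfun U u) * (1 - Bfun U u)) := by rw [hG1]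
      rw [this]
      exact abs_le.mpr ⟨by linarith, by linarith⟩
    have hG0b : ∀ u ∈ Set.Icc (0:ℝ) 1, |G0 u| ≤ 2 := by
      intro u hu
      obtain ⟨hwa, hwb⟩ := wAB_mem hUfin hUsub hu 0 false
      have hA0 := Afun_nonneg hUfin u; have hA1 := Afun_le_one hUsub u
      have hB0 := Bfun_nonneg hUsub u; have hB1 := Bfun_le_one hUfin u
      have k1 : 0 ≤ J (Afun U u) * Afun U u := mul_nonneg (hJb _).1 hA0
      have k1' : J (Afun U u) * Afun U u ≤ 1 := mul_le_one₀ (hJb _).2 hA0 hA1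
      have k2 : 0 ≤ J (Bfun U u) * Bfun U u := mul_nonneg (hJb _).1 hB0
      have k2' : J (Bfun U u) * Bfun U u ≤ 1 := mul_le_one₀ (hJb _).2 hB0 hB1
      have t1 : 0 ≤ wA U (u, (0, false)) * (J (Afun U u) * Afun U u) :=
        mul_nonneg hwa.1 k1
      have t1' : wA U (u, (0, false)) * (J (Afun U u) * Afun U u) ≤ 1 :=
        mul_le_one₀ hwa.2 k1 k1'
      have t2 : 0 ≤ wB U (u, (0, false)) * (J (Bfun U u) * Bfun U u) :=
        mul_nonneg hwb.1 k2
      have t2' : wB U (u, (0, false)) * (J (Bfun U u) * Bfun U u) ≤ 1 :=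
        mul_le_one₀ hwb.2 k2 k2'
      have : G0 u = -(wA U (u, (0, false)) * (J (Afun U u) * Afun U u))
          + -(wB U (u, (0, false)) * (J (Bfun U u) * Bfun U u)) := by rw [hG0]; ring
      rw [this]
      exact abs_le.mpr ⟨by linarith, by linarith⟩
    have hmul2 : ∀ (a x : ℝ), |a| ≤ 1 → |x| ≤ 2 → |a * x| ≤ 2 := by
      intro a x ha hx
      rw [abs_mul]
      calc |a| * |x| ≤ 1 * 2 := mul_le_mul ha hx (abs_nonneg _) zero_le_one
      _ = 2 := one_mul 2
    have hyabs : ∀ b, |yval b| ≤ 1 := fun b => by cases b <;> simp [yval]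
    have iy1 : Integrable (fun q : ℝ × (ℝ × Bool) => yval q.2.2 * G1 q.1) π :=
      intP (((Measurable.of_discrete (f := yval)).comp measurable_snd.snd).mul
        (hG1m.comp measurable_fst)).aestronglyMeasurable 2
        (hae.mono fun q hq => hmul2 _ _ (hyabs q.2.2) (hG1b q.1 hq))
    have iy0 : Integrable (fun q : ℝ × (ℝ × Bool) => yval q.2.2 * G0 q.1) π :=
      intP (((Measurable.of_discrete (f := yval)).comp measurable_snd.snd).mul
        (hG0m.comp measurable_fst)).aestronglyMeasurable 2
        (hae.mono fun q hq => hmul2 _ _ (hyabs q.2.2) (hG0b q.1 hq))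
    have ig0 : Integrable (fun q : ℝ × (ℝ × Bool) => G0 q.1) π :=
      intP (hG0m.comp measurable_fst).aestronglyMeasurable 2
        (hae.mono fun q hq => hG0b q.1 hq)
    have iu1 : Integrable (fun q : ℝ × (ℝ × Bool) => q.1 * G1 q.1) π :=
      intP (measurable_fst.mul (hG1m.comp measurable_fst)).aestronglyMeasurable 2
        (hae.mono fun q hq => hmul2 _ _ (abs_le.mpr ⟨by linarith [hq.1], hq.2⟩) (hG1b q.1 hq))
    have iu0 : Integrable (fun q : ℝ × (ℝ × Bool) => q.1 * G0 q.1) π :=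
      intP (measurable_fst.mul (hG0m.comp measurable_fst)).aestronglyMeasurable 2
        (hae.mono fun q hq => hmul2 _ _ (abs_le.mpr ⟨by linarith [hq.1], hq.2⟩) (hG0b q.1 hq))
    calc ∫ q, (wA U q * (fY (FA q) - fU (FA q)) + wB U q * (fY (FB q) - fU (FB q))) ∂π
        = ∫ q, (yval q.2.2 * G1 q.1 + (1 - yval q.2.2) * G0 q.1) ∂π :=
          integral_congr_ae (Filter.Eventually.of_forall hdecomp)
      _ = ∫ q, (yval q.2.2 * G1 q.1 + (G0 q.1 - yval q.2.2 * G0 q.1)) ∂π := by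
          refine integral_congr_ae (Filter.Eventually.of_forall fun q => ?_)
          ring
      _ = (∫ q, yval q.2.2 * G1 q.1 ∂π)
            + ((∫ q : ℝ × (ℝ × Bool), G0 q.1 ∂π) - ∫ q, yval q.2.2 * G0 q.1 ∂π) := by
          have isub : Integrable (fun q : ℝ × (ℝ × Bool) =>
              G0 q.1 - yval q.2.2 * G0 q.1) π := ig0.sub iy0
          rw [integral_add iy1 isub, integral_sub ig0 iy0]
      _ = (∫ q : ℝ × (ℝ × Bool), q.1 * G1 q.1 ∂π)
            + ((∫ q : ℝ × (ℝ × Bool), G0 q.1 ∂π) - ∫ q : ℝ × (ℝ × Bool), q.1 * G0 q.1 ∂π) := by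
          rw [master hae hcal hG1m, master hae hcal hG0m]
      _ = ∫ q, (q.1 * G1 q.1 + (1 - q.1) * G0 q.1) ∂π := by
          have isub2 : Integrable (fun q : ℝ × (ℝ × Bool) =>
              G0 q.1 - q.1 * G0 q.1) π := ig0.sub iu0
          rw [← integral_sub ig0 iu0, ← integral_add iu1 isub2]
          refine integral_congr_ae (Filter.Eventually.of_forall fun q => ?_)
          ring
      _ = ∫ q : ℝ × (ℝ × Bool), (0:ℝ) ∂π :=
          integral_congr_ae (hae.mono fun q hq => hzero q.1 hq)
      _ = 0 := integral_zero _ _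
  -- value bound
  have hvalb : ∫ p, |p.1 - p.2.1| ∂π' ≤ (∫ p, |p.1 - p.2.1| ∂π) + ε := by
    have hfm : Measurable fun p : ℝ × (ℝ × Bool) => |p.1 - p.2.1| :=
      (measurable_fst.sub (measurable_fst.comp measurable_snd)).abs
    have hbA : ∀ᵐ q ∂π, |(fun p : ℝ × (ℝ × Bool) => |p.1 - p.2.1|) (FA q)| ≤ 2 := by
      refine hmarg.mono fun q hv => ?_
      have h1 := Afun_nonneg hUfin q.1
      have h2 := Afun_le_one hUsub q.1
      simp only [hFA]
      rw [abs_abs]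
      exact abs_le.mpr ⟨by linarith [hv.2], by linarith [hv.1]⟩
    have hbB : ∀ᵐ q ∂π, |(fun p : ℝ × (ℝ × Bool) => |p.1 - p.2.1|) (FB q)| ≤ 2 := by
      refine hmarg.mono fun q hv => ?_
      have h1 := Bfun_nonneg hUsub q.1
      have h2 := Bfun_le_one hUfin q.1
      simp only [hFB]
      rw [abs_abs]
      exact abs_le.mpr ⟨by linarith [hv.2], by linarith [hv.1]⟩
    rw [total (fun p => |p.1 - p.2.1|) hfm 2 hbA hbB]
    have hmul2 : ∀ (a x : ℝ), a ∈ Set.Icc (0:ℝ) 1 → |x| ≤ 2 → |a * x| ≤ 2 := by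
      intro a x ha hx
      rw [abs_mul, abs_of_nonneg ha.1]
      calc a * |x| ≤ 1 * 2 := mul_le_mul ha.2 hx (abs_nonneg _) zero_le_one
      _ = 2 := one_mul 2
    have i1 : Integrable (fun q => wA U q * |Afun U q.1 - q.2.1|) π := by
      refine intP ((measurable_wA hUfin).mul (((measurable_Afun hUfin).comp
        measurable_fst).sub (measurable_fst.comp measurable_snd)).abs).aestronglyMeasurable 2
        ((hw.and hbA).mono fun q ⟨hwq, hbq⟩ => ?_)
      exact hmul2 _ _ hwq.1 (by simpa [hFA, abs_abs] using hbq)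
    have i2 : Integrable (fun q => wB U q * |Bfun U q.1 - q.2.1|) π := by
      refine intP ((measurable_wB hUfin).mul (((measurable_Bfun hUfin).comp
        measurable_fst).sub (measurable_fst.comp measurable_snd)).abs).aestronglyMeasurable 2
        ((hw.and hbB).mono fun q ⟨hwq, hbq⟩ => ?_)
      exact hmul2 _ _ hwq.2 (by simpa [hFB, abs_abs] using hbq)
    have iuv : Integrable (fun q : ℝ × (ℝ × Bool) => |q.1 - q.2.1|) π := by
      refine intP hfm.aestronglyMeasurable 2 ((hae.and hmarg).mono fun q ⟨h1, h2⟩ => ?_)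
      rw [abs_abs]
      exact abs_le.mpr ⟨by linarith [h1.1, h2.2], by linarith [h1.2, h2.1]⟩
    have irhs : Integrable (fun q : ℝ × (ℝ × Bool) => |q.1 - q.2.1| + ε) π :=
      iuv.add (integrable_const ε)
    have hpt : ∀ᵐ q ∂π, wA U q * |Afun U q.1 - q.2.1| + wB U q * |Bfun U q.1 - q.2.1|
        ≤ |q.1 - q.2.1| + ε := by
      refine ((hae.and (hw.and hsum))).mono fun q ⟨hu, hwq, hsq⟩ => ?_
      have hAu : Afun U q.1 ≤ q.1 := Afun_le hUsub hu.1
      have huB : q.1 ≤ Bfun U q.1 := le_Bfun hUsub hu.2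
      have hgap := gap hUfin hUsub hε hcover hu
      have h1 : |Afun U q.1 - q.2.1| ≤ |q.1 - q.2.1| + ε := by
        have t1 : |Afun U q.1 - q.2.1| ≤ |Afun U q.1 - q.1| + |q.1 - q.2.1| :=
          abs_sub_le _ _ _
        have t2 : |Afun U q.1 - q.1| ≤ ε := by
          rw [abs_of_nonpos (by linarith)]
          linarith
        linarith
      have h2 : |Bfun U q.1 - q.2.1| ≤ |q.1 - q.2.1| + ε := by
        have t1 : |Bfun U q.1 - q.2.1| ≤ |Bfun U q.1 - q.1| + |q.1 - q.2.1| :=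
          abs_sub_le _ _ _
        have t2 : |Bfun U q.1 - q.1| ≤ ε := by
          rw [abs_of_nonneg (by linarith)]
          linarith
        linarith
      calc wA U q * |Afun U q.1 - q.2.1| + wB U q * |Bfun U q.1 - q.2.1|
          ≤ wA U q * (|q.1 - q.2.1| + ε) + wB U q * (|q.1 - q.2.1| + ε) :=
            add_le_add (mul_le_mul_of_nonneg_left h1 hwq.1.1)
              (mul_le_mul_of_nonneg_left h2 hwq.2.1)
        _ = (wA U q + wB U q) * (|q.1 - q.2.1| + ε) := by ring
        _ = |q.1 - q.2.1| + ε := by rw [hsq, one_mul]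
    have hstep : (∫ q, wA U q *
          (fun p : ℝ × (ℝ × Bool) => |p.1 - p.2.1|) (FA q) ∂π) +
          (∫ q, wB U q * (fun p : ℝ × (ℝ × Bool) => |p.1 - p.2.1|) (FB q) ∂π)
        = (∫ q, wA U q * |Afun U q.1 - q.2.1| ∂π)
          + ∫ q, wB U q * |Bfun U q.1 - q.2.1| ∂π := by
      simp only [hFA, hFB]
    rw [hstep]
    calc (∫ q, wA U q * |Afun U q.1 - q.2.1| ∂π)
          + ∫ q, wB U q * |Bfun U q.1 - q.2.1| ∂π
        = ∫ q, (wA U q * |Afun U q.1 - q.2.1| + wB U q * |Bfun U q.1 - q.2.1|) ∂π :=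
          (integral_add i1 i2).symm
      _ ≤ ∫ q, (|q.1 - q.2.1| + ε) ∂π := integral_mono_ae (i1.add i2) irhs hpt
      _ = (∫ p, |p.1 - p.2.1| ∂π) + ε := by
          rw [integral_add iuv (integrable_const ε), integral_const]
          simp [measure_univ]
  exact ⟨π', hprob', hmarg', hU', hcal', hvalb⟩

end S17

theorem stmt17 (U : Set ℝ) (hUfin : U.Finite) (hU01 : ({0, 1} : Set ℝ) ⊆ U)
    (hUsub : U ⊆ Set.Icc (0 : ℝ) 1) (ε : ℝ) (hε : 0 < ε)
    (hcover : ∀ x ∈ Set.Icc (0 : ℝ) 1, ∃ y ∈ U, |x - y| ≤ ε / 2)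
    (D : Measure (ℝ × Bool)) (hD : IsProbabilityMeasure D)
    (hD01 : ∀ᵐ p ∂D, p.1 ∈ Set.Icc (0 : ℝ) 1) :
    dCE D ≤ dCEU U D ∧ dCEU U D ≤ dCE D + ε := by
  classical
  have hU0 : (0:ℝ) ∈ U := hU01 (Set.mem_insert _ _)
  have hU1 : (1:ℝ) ∈ U := hU01 (Set.mem_insert_iff.mpr (Or.inr rfl))
  -- the trivial extension sending (v, y) to (yval y, (v, y))
  set f0 : ℝ × Bool → ℝ × (ℝ × Bool) := fun q => (yval q.2, q) with hf0
  have measf0 : Measurable f0 :=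
    ((Measurable.of_discrete (f := yval)).comp measurable_snd).prodMk measurable_id
  set π₀ : Measure (ℝ × (ℝ × Bool)) := D.map f0 with hπ₀
  haveI hprob₀ : IsProbabilityMeasure π₀ := by
    rw [hπ₀]; exact Measure.isProbabilityMeasure_map measf0.aemeasurable
  have hsnd : π₀.map Prod.snd = D := by
    rw [hπ₀, Measure.map_map measurable_snd measf0]
    have h1 : (Prod.snd ∘ f0) = id := rfl
    rw [h1, Measure.map_id]
  have hy01 : ∀ b, yval b ∈ Set.Icc (0:ℝ) 1 := fun b => by
    cases b <;> norm_num [yval]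
  have hae₀ : ∀ᵐ p ∂π₀, p.1 ∈ Set.Icc (0:ℝ) 1 := by
    rw [hπ₀]
    refine (ae_map_iff (p := fun p : ℝ × (ℝ × Bool) => p.1 ∈ Set.Icc (0:ℝ) 1)
      measf0.aemeasurable (measurable_fst measurableSet_Icc)).mpr ?_
    exact Filter.Eventually.of_forall fun q => hy01 q.2
  have hsetm : MeasurableSet {p : ℝ × (ℝ × Bool) | p.1 = yval p.2.2} :=
    measurableSet_eq_fun measurable_fst ((Measurable.of_discrete (f := yval)).comp measurable_snd.snd)
  have haediag : ∀ᵐ p ∂π₀, p.1 = yval p.2.2 := by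
    rw [hπ₀]
    refine (ae_map_iff (p := fun p : ℝ × (ℝ × Bool) => p.1 = yval p.2.2)
      measf0.aemeasurable hsetm).mpr ?_
    exact Filter.Eventually.of_forall fun q => rfl
  have hcal₀ : ∀ S : Set ℝ, MeasurableSet S →
      (∫ p in {p : ℝ × (ℝ × Bool) | p.1 ∈ S}, yval p.2.2 ∂π₀) =
        ∫ p in {p : ℝ × (ℝ × Bool) | p.1 ∈ S}, p.1 ∂π₀ := by
    intro S hS
    exact integral_congr_ae (ae_restrict_of_ae (haediag.mono fun p hp => hp.symm))
  have hext₀ : IsExtension D π₀ := ⟨hprob₀, hsnd, hae₀, hcal₀⟩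
  have haeU₀ : ∀ᵐ p ∂π₀, p.1 ∈ U := by
    rw [hπ₀]
    refine (ae_map_iff (p := fun p : ℝ × (ℝ × Bool) => p.1 ∈ U)
      measf0.aemeasurable (measurable_fst hUfin.measurableSet)).mpr ?_
    refine Filter.Eventually.of_forall fun q => ?_
    rcases q with ⟨v, y⟩
    cases y with
    | false => simpa [hf0, yval] using hU0
    | true => simpa [hf0, yval] using hU1
  have hbdd : BddBelow {r : ℝ | ∃ π : Measure (ℝ × (ℝ × Bool)), IsExtension D π ∧
      r = ∫ p, |p.1 - p.2.1| ∂π} := by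
    refine ⟨0, ?_⟩
    rintro r ⟨π, hext, rfl⟩
    exact integral_nonneg fun p => abs_nonneg _
  have hbddU : BddBelow {r : ℝ | ∃ π : Measure (ℝ × (ℝ × Bool)), IsExtension D π ∧
      (∀ᵐ p ∂π, p.1 ∈ U) ∧ r = ∫ p, |p.1 - p.2.1| ∂π} := by
    refine ⟨0, ?_⟩
    rintro r ⟨π, hext, _, rfl⟩
    exact integral_nonneg fun p => abs_nonneg _
  constructor
  · refine csInf_le_csInf hbdd ⟨_, ⟨π₀, hext₀, haeU₀, rfl⟩⟩ ?_
    rintro r ⟨π, hext, _, rfl⟩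
    exact ⟨π, hext, rfl⟩
  · rw [← sub_le_iff_le_add]
    refine le_csInf ⟨_, ⟨π₀, hext₀, rfl⟩⟩ ?_
    rintro r ⟨π, hext, rfl⟩
    rw [sub_le_iff_le_add]
    obtain ⟨hprob, hmap, haeI, hcalI⟩ := hext
    haveI := hprob
    have hmargI : ∀ᵐ q ∂π, q.2.1 ∈ Set.Icc (0:ℝ) 1 := by
      have h2 := hD01
      rw [← hmap] at h2
      have hmeas : MeasurableSet {r : ℝ × Bool | r.1 ∈ Set.Icc (0:ℝ) 1} :=
        measurable_fst measurableSet_Icc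
      exact (ae_map_iff (p := fun r : ℝ × Bool => r.1 ∈ Set.Icc (0:ℝ) 1)
        measurable_snd.aemeasurable hmeas).mp h2
    obtain ⟨π', hprob', hmarg', hU', hcal', hval'⟩ :=
      S17.round_ext U hUfin hU0 hU1 hUsub hε hcover hmargI haeI hcalI
    have hext' : IsExtension D π' :=
      ⟨hprob', by rw [hmarg', hmap], hU'.mono fun p hp => hUsub hp, hcal'⟩
    have hle : dCEU U D ≤ ∫ p, |p.1 - p.2.1| ∂π' := csInf_le hbddU ⟨π', hext', hU', rfl⟩
    exact hle.trans hval'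

end
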